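/- Let (X,d) be an ultrametric space. Then the map x ↦ δ_x from X to (J_ω(X), d̂) is an isometric embedding: d̂(δ_x, δ_y) = d(x,y) for all x, y ∈ X. -/

import Mathlib

open scoped ENNReal

noncomputable section

/-- A metric is an *ultrametric* if the strong triangle inequality holds. -/
def IsUltra (X : Type*) [MetricSpace X] : Prop :=
  ∀ x y z : X, dist x y ≤ max (dist x z) (dist z y)

/-- `mmOf x α` is the max-min functional `∨ᵢ αᵢ ∧ δ_{x i}`,
`φ ↦ maxᵢ min (α i) (φ (x i))` (computed in the extended reals). -/
def mmOf {A : Type*} {n : ℕ} (x : Fin (n + 1) → A) (α : Fin (n + 1) → EReal) :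
    (A → ℝ) → ℝ :=
  fun φ => (⨆ i, min (α i) ((φ (x i) : EReal))).toReal

/-- `μ` is a max-min measure of finite support, with support contained in `S`. -/
def IsMMOn {A : Type*} (S : Set A) (μ : (A → ℝ) → ℝ) : Prop :=
  ∃ (n : ℕ) (x : Fin (n + 1) → A) (α : Fin (n + 1) → EReal),
    (∀ i, x i ∈ S) ∧ (∃ i, α i = ⊤) ∧ μ = mmOf x α

/-- `μ` is a max-min measure of finite support. -/
def IsMM {A : Type*} (μ : (A → ℝ) → ℝ) : Prop :=
  IsMMOn Set.univ μ

/-- `idemOf x α` is the idempotent measure `∨ᵢ αᵢ ⊙ δ_{x i}`,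
`φ ↦ maxᵢ (α i + φ (x i))` (computed in the extended reals). -/
def idemOf {A : Type*} {n : ℕ} (x : Fin (n + 1) → A) (α : Fin (n + 1) → EReal) :
    (A → ℝ) → ℝ :=
  fun φ => (⨆ i, (α i + (φ (x i) : EReal))).toReal

/-- `μ` is an idempotent measure of finite support, with support contained in `S`. -/
def IsIdemOn {A : Type*} (S : Set A) (μ : (A → ℝ) → ℝ) : Prop :=
  ∃ (n : ℕ) (x : Fin (n + 1) → A) (α : Fin (n + 1) → EReal),
    (∀ i, x i ∈ S) ∧ (∀ i, α i ≤ 0) ∧ (∃ i, α i = 0) ∧ μ = idemOf x α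

/-- `μ` is an idempotent measure of finite support. -/
def IsIdem {A : Type*} (μ : (A → ℝ) → ℝ) : Prop :=
  IsIdemOn Set.univ μ

/-- The Dirac measure `δ_a`. -/
def dirac {A : Type*} (a : A) : (A → ℝ) → ℝ := fun φ => φ a

/-- `FrE e r φ`: the function `φ` is constant on every open `r`-ball of the
(extended-valued) distance `e`; this is the family `𝓕_r`. -/
def FrE {A : Type*} (e : A → A → ℝ≥0∞) (r : ℝ≥0∞) (φ : A → ℝ) : Prop :=
  ∀ x y : A, e x y < r → φ x = φ y

/-- The ultrametric `d̂` on functionals: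
`d̂(μ,ν) = inf {r > 0 ∣ μ φ = ν φ for every φ ∈ 𝓕_r}`. -/
def dHatE {A : Type*} (e : A → A → ℝ≥0∞) (μ ν : (A → ℝ) → ℝ) : ℝ≥0∞ :=
  sInf {r : ℝ≥0∞ | 0 < r ∧ ∀ φ : A → ℝ, FrE e r φ → μ φ = ν φ}

/-- The pushforward `J_ω(f)` of functionals along `f`. -/
def Jmap {A B : Type*} (f : A → B) (μ : (A → ℝ) → ℝ) : (B → ℝ) → ℝ :=
  fun φ => μ (φ ∘ f)

/-- The extended distance of a metric space, as a two-variable function. -/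
def eD (X : Type*) [PseudoEMetricSpace X] : X → X → ℝ≥0∞ :=
  fun x y => edist x y

/-- The monad multiplication (`ξ` for max-min measures, `ζ` for idempotent
measures): `mult M φ = M (μ ↦ μ φ)`. -/
def mult {A : Type*} (M : (((A → ℝ) → ℝ) → ℝ) → ℝ) : (A → ℝ) → ℝ :=
  fun φ => M fun μ => μ φ


/-- For an ultrametric space `(X,d)`, the Dirac map
`x ↦ δ_x : X → (J_ω(X), d̂)` is an isometric embedding. -/
theorem dirac_isometric_embedding {X : Type*} [MetricSpace X] (hX : IsUltra X)
    (x y : X) :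
    dHatE (eD X) (dirac x) (dirac y) = edist x y := by
  have hUltraE : ∀ a b c : X, edist a b ≤ max (edist a c) (edist c b) := by
    intro a b c
    rw [edist_dist, edist_dist, edist_dist]
    refine (ENNReal.ofReal_le_ofReal (hX a b c)).trans ?_
    rcases max_cases (dist a c) (dist c b) with ⟨h, _⟩ | ⟨h, _⟩ <;> rw [h]
    · exact le_max_left _ _
    · exact le_max_right _ _
  apply le_antisymm
  · -- sInf ≤ edist x y : every r > edist x y is in the set
    refine le_of_forall_gt_imp_ge_of_dense fun r hr => sInf_le ?_
    refine ⟨lt_of_le_of_lt (zero_le (a := edist x y)) hr, fun φ hφ => ?_⟩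
    exact hφ x y hr
  · -- edist x y ≤ sInf : every element of the set is > edist x y
    refine le_sInf fun r hr => ?_
    obtain ⟨hr0, hr2⟩ := hr
    by_contra hlt
    push_neg at hlt
    -- r < edist x y; build φ constant on r-balls separating x and y
    set φ : X → ℝ := fun z => if edist x z < r then 1 else 0 with hφdef
    have hFr : FrE (eD X) r φ := by
      intro a b hab
      simp only [hφdef]
      by_cases ha : edist x a < r
      · have hb : edist x b < r :=
          lt_of_le_of_lt (hUltraE x b a) (max_lt ha hab)
        simp [ha, hb]
      · have hb : ¬ edist x b < r := by
          intro hb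
          exact ha (lt_of_le_of_lt (hUltraE x a b)
            (max_lt hb (by rwa [edist_comm])))
        simp [ha, hb]
    have := hr2 φ hFr
    simp only [dirac, hφdef] at this
    rw [if_pos (by simpa using hr0), if_neg (not_lt.mpr hlt.le)] at this
    norm_num at this

end
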